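/- Let 0 < θ < 1/2. Then there exists a unique δ ∈ (0,1) such that log(1 + r^(2θ)) − 2r ≥ 0 for all r ∈ [0, δ] and log(1 + r^(2θ)) − 2r ≤ 0 for all r ≥ δ. -/

import Mathlib

open Real Set

theorem exists_unique_delta (θ : ℝ) (hθ : 0 < θ) (hθ' : θ < 1/2) :
    ∃! δ : ℝ, δ ∈ Set.Ioo (0:ℝ) 1 ∧
      (∀ r : ℝ, r ∈ Set.Icc (0:ℝ) δ → 0 ≤ Real.log (1 + r ^ (2 * θ)) - 2 * r) ∧
      (∀ r : ℝ, δ ≤ r → Real.log (1 + r ^ (2 * θ)) - 2 * r ≤ 0) := by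
  set α := 2 * θ with hαdef
  have hα0 : 0 < α := by positivity
  have hα1 : α < 1 := by rw [hαdef]; linarith
  set h : ℝ → ℝ := fun r => Real.log (1 + r ^ α) / r with hh
  -- key inequality : u/(1+u) < log(1+u) for u > 0
  have key : ∀ u : ℝ, 0 < u → u / (1 + u) < Real.log (1 + u) := by
    intro u hu
    have h1 : (0:ℝ) < 1 + u := by linarith
    have hne : ((1+u)⁻¹ : ℝ) ≠ 1 := by
      have : ((1+u)⁻¹ : ℝ) < 1 := by
        rw [inv_lt_one_iff₀]; right; linarith
      exact ne_of_lt this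
    have hlt := Real.log_lt_sub_one_of_pos (x := (1+u)⁻¹) (by positivity) hne
    rw [Real.log_inv] at hlt
    have h2 : (1+u)⁻¹ - 1 = -(u/(1+u)) := by field_simp; ring
    rw [h2] at hlt
    linarith
  -- derivative
  have hder : ∀ r : ℝ, 0 < r →
      HasDerivAt h ((α * r ^ α / (1 + r ^ α) - Real.log (1 + r ^ α)) / r ^ 2) r := by
    intro r hr
    have hpos : (0:ℝ) < 1 + r ^ α := by positivity
    have A : HasDerivAt (fun x : ℝ => x ^ α) (α * r ^ (α - 1)) r :=
      Real.hasDerivAt_rpow_const (Or.inl hr.ne')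
    have B : HasDerivAt (fun x : ℝ => 1 + x ^ α) (α * r ^ (α - 1)) r := by
      exact A.const_add 1
    have C : HasDerivAt (fun x : ℝ => Real.log (1 + x ^ α)) (α * r ^ (α - 1) / (1 + r ^ α)) r := by
      have := (Real.hasDerivAt_log hpos.ne').comp r B
      rw [div_eq_inv_mul]; exact this
    have D := C.div (hasDerivAt_id r) hr.ne'
    refine D.congr_deriv ?_
    have hr1 : r ^ (α - 1) * r = r ^ α := by
      rw [Real.rpow_sub hr, Real.rpow_one]
      field_simp
    rw [id_eq, mul_one, div_mul_eq_mul_div, mul_assoc α, hr1]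
  have hcont : ∀ r : ℝ, 0 < r → ContinuousAt h r := fun r hr => (hder r hr).continuousAt
  -- strict antitone
  have hanti : StrictAntiOn h (Ioi 0) := by
    apply strictAntiOn_of_deriv_neg (convex_Ioi 0)
    · exact fun r hr => (hcont r hr).continuousWithinAt
    · intro r hr
      rw [interior_Ioi] at hr
      rw [(hder r hr).deriv]
      apply div_neg_of_neg_of_pos _ (pow_pos hr 2)
      have hu : 0 < r ^ α := Real.rpow_pos_of_pos hr α
      have hk := key _ hu
      have h2 : α * (r ^ α / (1 + r ^ α)) < r ^ α / (1 + r ^ α) :=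
        mul_lt_of_lt_one_left (by positivity) hα1
      have h3 : α * r ^ α / (1 + r ^ α) = α * (r ^ α / (1 + r ^ α)) := by ring
      rw [h3]
      linarith
  -- explicit small point a with h a > 2
  set a : ℝ := (4:ℝ) ^ (-(1 - α)⁻¹) with hadef
  have ha0 : 0 < a := Real.rpow_pos_of_pos (by norm_num) _
  have ha1 : a < 1 := by
    apply Real.rpow_lt_one_of_one_lt_of_neg (by norm_num)
    have h1 : 0 < (1 - α)⁻¹ := inv_pos.mpr (by linarith)
    linarith
  have haa : a ^ (1 - α) = 1/4 := by
    rw [hadef, ← Real.rpow_mul (by norm_num : (0:ℝ) ≤ 4)]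
    have he : -(1-α)⁻¹ * (1-α) = -1 := by
      have hne : (1:ℝ) - α ≠ 0 := ne_of_gt (by linarith)
      field_simp
    rw [he, Real.rpow_neg_one]
    norm_num
  have haa' : a ^ (α - 1) = 4 := by
    have e1 : a ^ (α - 1) = (a ^ (1 - α))⁻¹ := by
      rw [← Real.rpow_neg ha0.le]; ring_nf
    rw [e1, haa]; norm_num
  have ha2 : 2 < h a := by
    have hu : 0 < a ^ α := Real.rpow_pos_of_pos ha0 α
    have hu1 : a ^ α < 1 := Real.rpow_lt_one ha0.le ha1 hα0
    have hk := key _ hu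
    have hrac : a ^ α / a = 4 := by
      rw [show a ^ α / a = a ^ α / a ^ (1:ℝ) by rw [Real.rpow_one],
        ← Real.rpow_sub ha0]
      exact haa'
    have h4 : a ^ α / 2 / a = 2 := by
      rw [div_div, mul_comm, ← div_div, hrac]; norm_num
    have step1 : a ^ α / 2 / a ≤ a ^ α / (1 + a ^ α) / a := by
      gcongr ?_ / ?_ / _ <;> linarith
    have step2 : a ^ α / (1 + a ^ α) / a < Real.log (1 + a ^ α) / a := by
      gcongr
    show 2 < Real.log (1 + a ^ α) / a
    linarith
  have h1lt : h 1 < 2 := by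
    show Real.log (1 + (1:ℝ) ^ α) / 1 < 2
    rw [Real.one_rpow, div_one]
    have := Real.log_lt_sub_one_of_pos (by norm_num : (0:ℝ) < 1 + 1) (by norm_num)
    linarith
  -- IVT
  have hconth : ContinuousOn h (Icc a 1) := fun r hr =>
    (hcont r (lt_of_lt_of_le ha0 hr.1)).continuousWithinAt
  have hmem : (2:ℝ) ∈ Ioo (h 1) (h a) := ⟨h1lt, ha2⟩
  obtain ⟨δ, hδmem, hδeq⟩ := intermediate_value_Ioo' ha1.le hconth hmem
  have hδ0 : 0 < δ := lt_trans ha0 hδmem.1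
  have hδ1 : δ < 1 := hδmem.2
  refine ⟨δ, ⟨⟨hδ0, hδ1⟩, ?_, ?_⟩, ?_⟩
  · -- 0 ≤ f on [0, δ]
    intro r hr
    rcases eq_or_lt_of_le hr.1 with h0 | h0
    · rw [← h0]
      rw [Real.zero_rpow hα0.ne', add_zero, Real.log_one]
      norm_num
    · have hr2 : 2 ≤ h r := by
        rcases eq_or_lt_of_le hr.2 with h1 | h1
        · rw [h1, hδeq]
        · exact le_of_lt (hδeq ▸ hanti (mem_Ioi.mpr h0) (mem_Ioi.mpr hδ0) h1)
      have : 2 * r ≤ Real.log (1 + r ^ α) := (le_div_iff₀ h0).mp hr2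
      linarith
  · -- f ≤ 0 on [δ, ∞)
    intro r hr
    have hr0 : 0 < r := lt_of_lt_of_le hδ0 hr
    have hr2 : h r ≤ 2 := by
      rcases eq_or_lt_of_le hr with h1 | h1
      · rw [← h1, hδeq]
      · exact le_of_lt (hδeq ▸ hanti (mem_Ioi.mpr hδ0) (mem_Ioi.mpr hr0) h1)
    have : Real.log (1 + r ^ α) ≤ 2 * r := by
      have := (div_le_iff₀ hr0).mp hr2
      linarith
    linarith
  · -- uniqueness
    rintro δ' ⟨⟨hδ'0, hδ'1⟩, H1, H2⟩
    have e1 := H1 δ' ⟨hδ'0.le, le_refl _⟩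
    have e2 := H2 δ' (le_refl _)
    have e3 : Real.log (1 + δ' ^ α) = 2 * δ' := by linarith
    have e4 : h δ' = 2 := by
      show Real.log (1 + δ' ^ α) / δ' = 2
      rw [e3]; field_simp
    exact hanti.injOn (mem_Ioi.mpr hδ'0) (mem_Ioi.mpr hδ0) (by rw [e4, hδeq])
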